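/- Compatible paths: let v0, v1, v2 be duplicate-free lists, and suppose v1 is obtained from v0 by applying a sequence S1 of operations and v2 by applying a sequence S2 of operations, where the sets of elements inserted by S1 and by S2 are disjoint from each other and from the elements of v0 as appropriate so that every element inserted along S2 never occurs in any intermediate state along S1 (and vice versa). Then every intermediate state along S1 is compatible with every intermediate state along S2; in particular v1 and v2 are compatible. -/

import Mathlib

/-- Two lists are compatible: relative order of common elements agrees. -/
def Compatible {U : Type*} [DecidableEq U] (w1 w2 : List U) : Prop :=
  ∀ a b : U, a ∈ w1 → b ∈ w1 → a ∈ w2 → b ∈ w2 →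
    (w1.idxOf a < w1.idxOf b ↔ w2.idxOf a < w2.idxOf b)

/-- List operations. -/
inductive LOp (U : Type*) where
  | ins (x : U) (p : ℕ)
  | del (p : ℕ)

/-- Apply a list operation. -/
def applyOp {U : Type*} : LOp U → List U → List U
  | .ins x p, σ => σ.take p ++ x :: σ.drop p
  | .del p, σ => σ.take p ++ σ.drop (p + 1)

/-- The intermediate states of applying a sequence of operations to `v0`:
`v0` together with the result of each prefix. -/
def states {U : Type*} (S : List (LOp U)) (v0 : List U) : List (List U) :=
  S.scanl (fun σ op => applyOp op σ) v0

/-- The elements inserted by a sequence of operations. -/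
def insertedElems {U : Type*} (S : List (LOp U)) : List U :=
  S.filterMap (fun op => match op with | .ins x _ => some x | .del _ => none)

lemma sublist_erase_of_not_mem' {U : Type*} [DecidableEq U] (x : U) {s l : List U}
    (h : List.Sublist s l) (hx : x ∉ s) : List.Sublist s (l.erase x) := by
  induction h with
  | slnil => simp
  | cons y h ih =>
    by_cases hy : y = x
    · subst hy; rw [List.erase_cons_head]; exact h
    · rw [List.erase_cons_tail (by simpa using hy)]
      exact (ih hx).cons y
  | @cons_cons _ _ y h ih =>
    have hyx : y ≠ x := fun e => hx (e ▸ List.mem_cons_self)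
    rw [List.erase_cons_tail (by simpa using hyx)]
    exact (ih (fun hs => hx (List.mem_cons_of_mem _ hs))).cons_cons y

lemma erase_middle' {U : Type*} [DecidableEq U] (l₁ l₂ : List U) (x : U) (h : x ∉ l₁) :
    (l₁ ++ x :: l₂).erase x = l₁ ++ l₂ := by
  rw [List.erase_append_right _ h, List.erase_cons_head]

lemma not_mem_pair' {U : Type*} {x a b : U} (h1 : a ≠ x) (h2 : b ≠ x) :
    x ∉ ([a, b] : List U) := by
  intro h
  have : x = a ∨ x = b := by simpa using h
  rcases this with rfl | rfl
  · exact h1 rfl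
  · exact h2 rfl

lemma order_iff_sublist' {U : Type*} [DecidableEq U] :
    ∀ (w : List U), w.Nodup → ∀ a b : U, a ∈ w → b ∈ w → a ≠ b →
      (w.idxOf a < w.idxOf b ↔ List.Sublist [a, b] w) := by
  intro w
  induction w with
  | nil => simp
  | cons c t ih =>
    intro hnd a b ha hb hne
    rcases List.nodup_cons.mp hnd with ⟨hc, hndt⟩
    by_cases hac : a = c
    · subst hac
      have hbt : b ∈ t := by
        rcases List.mem_cons.mp hb with h | h
        · exact absurd h.symm hne
        · exact h
      have : List.Sublist [a, b] (a :: t) := (List.singleton_sublist.mpr hbt).cons_cons a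
      rw [List.idxOf_cons_self, List.idxOf_cons_ne t hne]
      exact iff_of_true (Nat.succ_pos _) this
    · by_cases hbc : b = c
      · subst hbc
        rw [List.idxOf_cons_self, List.idxOf_cons_ne t (Ne.symm hne)]
        constructor
        · intro h; omega
        · intro h
          cases h with
          | cons _ h' => exact absurd (h'.subset (by simp)) hc
          | cons_cons => exact absurd rfl hne
      · have hat : a ∈ t := (List.mem_cons.mp ha).resolve_left hac
        have hbt : b ∈ t := (List.mem_cons.mp hb).resolve_left hbc
        rw [List.idxOf_cons_ne t (Ne.symm hac), List.idxOf_cons_ne t (Ne.symm hbc)]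
        rw [Nat.succ_lt_succ_iff, ih hndt a b hat hbt hne]
        constructor
        · intro h; exact h.cons c
        · intro h
          cases h with
          | cons _ h' => exact h'
          | cons_cons => exact absurd rfl hac

lemma self_mem_states' {U : Type*} (S : List (LOp U)) (v0 : List U) : v0 ∈ states S v0 := by
  cases S <;> simp [states, List.scanl_cons, List.scanl_nil]

lemma mem_states_sub' {U : Type*} :
    ∀ (S : List (LOp U)) (v0 : List U), ∀ w ∈ states S v0, ∀ a ∈ w,
      a ∈ v0 ∨ a ∈ insertedElems S := by
  intro S
  induction S with
  | nil =>
    intro v0 w hw a haw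
    simp [states, List.scanl_nil] at hw
    subst hw; exact Or.inl haw
  | cons op S ih =>
    intro v0 w hw a haw
    rw [states, List.scanl_cons] at hw
    rcases List.mem_cons.mp hw with rfl | hw
    · exact Or.inl haw
    · rcases ih (applyOp op v0) w hw a haw with h | h
      · cases op with
        | ins x p =>
          simp only [applyOp, List.mem_append, List.mem_cons] at h
          rcases h with h | h | h
          · exact Or.inl (List.take_subset _ _ h)
          · subst h; right; simp [insertedElems]
          · exact Or.inl (List.drop_subset _ _ h)
        | del p =>
          simp only [applyOp, List.mem_append] at h
          rcases h with h | h
          · exact Or.inl (List.take_subset _ _ h)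
          · exact Or.inl (List.drop_subset _ _ h)
      · right
        cases op <;> simp [insertedElems] at h ⊢ <;> tauto

lemma order_pres' {U : Type*} [DecidableEq U] :
    ∀ (S : List (LOp U)) (v0 : List U), (∀ w ∈ states S v0, w.Nodup) →
      ∀ a b : U, a ∈ v0 → b ∈ v0 → a ∉ insertedElems S → b ∉ insertedElems S →
      ∀ w ∈ states S v0, a ∈ w → b ∈ w →
      (w.idxOf a < w.idxOf b ↔ v0.idxOf a < v0.idxOf b) := by
  intro S
  induction S with
  | nil =>
    intro v0 _ a b _ _ _ _ w hw _ _
    simp [states, List.scanl_nil] at hw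
    subst hw; rfl
  | cons op S ih =>
    intro v0 hnd a b hav0 hbv0 haI hbI w hw haw hbw
    by_cases hab : a = b
    · subst hab; simp
    rw [states, List.scanl_cons] at hw
    rcases List.mem_cons.mp hw with rfl | hw
    · rfl
    · set v1 := applyOp op v0 with hv1
      have hnd0 : v0.Nodup := hnd v0 (self_mem_states' _ _)
      have hnd1 : v1.Nodup := by
        apply hnd
        rw [states, List.scanl_cons]
        exact List.mem_cons_of_mem _ (self_mem_states' S v1)
      have hndS : ∀ w' ∈ states S v1, w'.Nodup := by
        intro w' hw'
        apply hnd
        rw [states, List.scanl_cons]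
        exact List.mem_cons_of_mem _ hw'
      have haI' : a ∉ insertedElems S := by
        intro h; apply haI; cases op <;> simp [insertedElems] at h ⊢ <;> tauto
      have hbI' : b ∉ insertedElems S := by
        intro h; apply hbI; cases op <;> simp [insertedElems] at h ⊢ <;> tauto
      have hav1 : a ∈ v1 := (mem_states_sub' S v1 w hw a haw).resolve_right haI'
      have hbv1 : b ∈ v1 := (mem_states_sub' S v1 w hw b hbw).resolve_right hbI'
      have key : v1.idxOf a < v1.idxOf b ↔ v0.idxOf a < v0.idxOf b := by
        rw [order_iff_sublist' v1 hnd1 a b hav1 hbv1 hab,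
            order_iff_sublist' v0 hnd0 a b hav0 hbv0 hab]
        cases op with
        | ins x p =>
          have hax : a ≠ x := by
            intro h; apply haI; simp [insertedElems, h]
          have hbx : b ≠ x := by
            intro h; apply hbI; simp [insertedElems, h]
          have hv1eq : v1 = v0.take p ++ x :: v0.drop p := rfl
          have hxtake : x ∉ v0.take p := by
            rw [hv1eq] at hnd1
            rcases List.nodup_append.mp hnd1 with ⟨_, _, hdisj⟩
            exact fun h => hdisj _ h _ List.mem_cons_self rfl
          constructor
          · intro h
            have h2 : List.Sublist [a, b] (v1.erase x) :=
              sublist_erase_of_not_mem' x h (not_mem_pair' hax hbx)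
            rwa [hv1eq, erase_middle' _ _ _ hxtake, List.take_append_drop] at h2
          · intro h
            rw [← List.take_append_drop p v0] at h
            rw [hv1eq]
            exact h.trans ((List.sublist_cons_self x _).append_left _)
        | del p =>
          have hv1eq : v1 = v0.take p ++ v0.drop (p + 1) := rfl
          by_cases hp : p < v0.length
          · have hsplit : v0 = v0.take p ++ v0[p] :: v0.drop (p + 1) := by
              conv_lhs => rw [← List.take_append_drop p v0, List.drop_eq_getElem_cons hp]
            have hctake : v0[p] ∉ v0.take p := by
              have := hnd0
              rw [hsplit] at this
              rcases List.nodup_append.mp this with ⟨_, _, hdisj⟩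
              exact fun h => hdisj _ h _ List.mem_cons_self rfl
            have hcdrop : v0[p] ∉ v0.drop (p + 1) := by
              have := hnd0
              rw [hsplit] at this
              rcases List.nodup_append.mp this with ⟨_, h2, _⟩
              exact (List.nodup_cons.mp h2).1
            have hac : a ≠ v0[p] := by
              intro h
              rw [hv1eq] at hav1
              rcases List.mem_append.mp hav1 with h' | h'
              · exact hctake (h ▸ h')
              · exact hcdrop (h ▸ h')
            have hbc : b ≠ v0[p] := by
              intro h
              rw [hv1eq] at hbv1
              rcases List.mem_append.mp hbv1 with h' | h'
              · exact hctake (h ▸ h')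
              · exact hcdrop (h ▸ h')
            constructor
            · intro h
              rw [hv1eq] at h
              rw [hsplit]
              exact h.trans ((List.sublist_cons_self _ _).append_left _)
            · intro h
              rw [hsplit] at h
              have h2 := sublist_erase_of_not_mem' v0[p] h (not_mem_pair' hac hbc)
              rwa [erase_middle' _ _ _ hctake, ← hv1eq] at h2
          · have : v1 = v0 := by
              rw [hv1eq, List.take_of_length_le (le_of_not_gt hp),
                  List.drop_eq_nil_of_le (by omega), List.append_nil]
            rw [this]
      rw [← key]
      exact ih v1 hndS a b hav1 hbv1 haI' hbI' w hw haw hbw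

theorem compatible_paths {U : Type*} [DecidableEq U]
    (v0 : List U) (S1 S2 : List (LOp U))
    (hnodup1 : ∀ w ∈ states S1 v0, w.Nodup)
    (hnodup2 : ∀ w ∈ states S2 v0, w.Nodup)
    (hfresh1 : ∀ w1 ∈ states S1 v0, ∀ x ∈ insertedElems S2, x ∉ w1)
    (hfresh2 : ∀ w2 ∈ states S2 v0, ∀ x ∈ insertedElems S1, x ∉ w2) :
    ∀ w1 ∈ states S1 v0, ∀ w2 ∈ states S2 v0, Compatible w1 w2 := by
  intro w1 hw1 w2 hw2 a b ha1 hb1 ha2 hb2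
  have haI1 : a ∉ insertedElems S1 := fun h => hfresh2 w2 hw2 a h ha2
  have hbI1 : b ∉ insertedElems S1 := fun h => hfresh2 w2 hw2 b h hb2
  have haI2 : a ∉ insertedElems S2 := fun h => hfresh1 w1 hw1 a h ha1
  have hbI2 : b ∉ insertedElems S2 := fun h => hfresh1 w1 hw1 b h hb1
  have hav0 : a ∈ v0 := (mem_states_sub' S1 v0 w1 hw1 a ha1).resolve_right haI1
  have hbv0 : b ∈ v0 := (mem_states_sub' S1 v0 w1 hw1 b hb1).resolve_right hbI1
  have e1 := order_pres' S1 v0 hnodup1 a b hav0 hbv0 haI1 hbI1 w1 hw1 ha1 hb1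
  have e2 := order_pres' S2 v0 hnodup2 a b hav0 hbv0 haI2 hbI2 w2 hw2 ha2 hb2
  exact e1.trans e2.symm
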